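/- In the dominator tree of a directed graph g with source s, for any two distinct vertices u, v with v in the subtree rooted at u, blocking u disconnects v from s; conversely if v is reachable from s in g and is not in the subtree rooted at u, then v remains reachable from s in g with u removed. -/

import Mathlib

/-!
Dominators in a directed graph `g : V → V → Prop` with a source vertex `s`.
-/

open Finset

noncomputable section
open scoped Classical

variable {V : Type*}

/-- `w` is reachable from `s` in the directed graph `g`. -/
def Reach (g : V → V → Prop) (s w : V) : Prop :=
  Relation.ReflTransGen g s w

/-- `w` is reachable from `s` in `g` by a path avoiding the vertex `u`. -/
def ReachAvoid (g : V → V → Prop) (u s w : V) : Prop :=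
  Relation.ReflTransGen (fun a b => g a b ∧ a ≠ u ∧ b ≠ u) s w

/-- `u` dominates `v` (w.r.t. source `s`): `v` is reachable from `s` and every
path from `s` to `v` passes through `u`. -/
def Dominates (g : V → V → Prop) (s u v : V) : Prop :=
  Reach g s v ∧ (u = v ∨ ¬ ReachAvoid g u s v)

/-- `u` is the immediate dominator of `v`: `u` is a dominator of `v` other than
`v`, and every other dominator of `v` dominates `u`. -/
def IsIdom (g : V → V → Prop) (s u v : V) : Prop :=
  Dominates g s u v ∧ u ≠ v ∧ ∀ w, Dominates g s w v → w ≠ v → Dominates g s w u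

/-- `v` lies in the subtree rooted at `u` of the dominator tree of `g` with
source `s` (i.e. `u` is an ancestor of `v`, or `v` itself, along immediate
dominator edges). -/
def InDomSubtree (g : V → V → Prop) (s u v : V) : Prop :=
  Relation.ReflTransGen (fun a b => IsIdom g s a b) u v

section Aux

/-- Splitting a path at the first occurrence of `x`: either there is a prefix
reaching `x` on which `x` occurs only at the end, or the path avoids `x`. -/
lemma lemA {r : V → V → Prop} {x s v : V} (h : Relation.ReflTransGen r s v) :
    Relation.ReflTransGen (fun a b => r a b ∧ a ≠ x) s x ∨
      (Relation.ReflTransGen (fun a b => r a b ∧ a ≠ x ∧ b ≠ x) s v ∧ v ≠ x) := by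
  induction h with
  | refl =>
      by_cases hs : s = x
      · subst hs; exact Or.inl Relation.ReflTransGen.refl
      · exact Or.inr ⟨Relation.ReflTransGen.refl, hs⟩
  | @tail b c hab hbc ih =>
      rcases ih with h1 | ⟨p, hb⟩
      · exact Or.inl h1
      · by_cases hc : c = x
        · subst hc
          exact Or.inl ((Relation.ReflTransGen.mono (fun a b h => ⟨h.1, h.2.1⟩) _ _ p).tail ⟨hbc, hb⟩)
        · exact Or.inr ⟨p.tail ⟨hbc, hb, hc⟩, hc⟩

/-- Splitting a path at the last occurrence of `x`: either the path avoids `x`,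
or there is a suffix from `x` on which `x` occurs only at the start. -/
lemma lemD {r : V → V → Prop} {x s v : V} (h : Relation.ReflTransGen r s v) :
    (Relation.ReflTransGen (fun a b => r a b ∧ a ≠ x ∧ b ≠ x) s v ∧ v ≠ x) ∨
      Relation.ReflTransGen (fun a b => r a b ∧ b ≠ x) x v := by
  induction h with
  | refl =>
      by_cases hs : s = x
      · subst hs; exact Or.inr Relation.ReflTransGen.refl
      · exact Or.inl ⟨Relation.ReflTransGen.refl, hs⟩
  | @tail b c hab hbc ih =>
      by_cases hc : c = x
      · subst hc; exact Or.inr Relation.ReflTransGen.refl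
      · rcases ih with ⟨p, hb⟩ | q
        · exact Or.inl ⟨p.tail ⟨hbc, hb, hc⟩, hc⟩
        · exact Or.inr (q.tail ⟨hbc, hc⟩)

/-- If all edge targets on a path avoid `x` and the start avoids `x`,
then the whole path avoids `x`. -/
lemma lemE {r : V → V → Prop} {x c v : V}
    (h : Relation.ReflTransGen (fun a b => r a b ∧ b ≠ x) c v) :
    c ≠ x → Relation.ReflTransGen (fun a b => r a b ∧ a ≠ x ∧ b ≠ x) c v := by
  induction h using Relation.ReflTransGen.head_induction_on with
  | refl => intro _; exact Relation.ReflTransGen.refl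
  | head hab _ ih =>
      intro ha
      exact Relation.ReflTransGen.head ⟨hab.1, ha, hab.2⟩ (ih hab.2)

/-- If all edge sources on a path avoid `x` and the end avoids `x`,
then the whole path avoids `x`. -/
lemma lemE' {r : V → V → Prop} {x c v : V}
    (h : Relation.ReflTransGen (fun a b => r a b ∧ a ≠ x) c v) :
    v ≠ x → Relation.ReflTransGen (fun a b => r a b ∧ a ≠ x ∧ b ≠ x) c v := by
  induction h with
  | refl => intro _; exact Relation.ReflTransGen.refl
  | @tail b c hab hbc ih =>
      intro hc
      exact (ih hbc.2).tail ⟨hbc.1, hbc.2, hc⟩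

/-- Blocking is transitive: if `w` blocks `x` from `s` and `z` blocks `w`,
then `z` blocks `x`. -/
lemma blocks_trans {g : V → V → Prop} {s w x z : V}
    (hwx : ¬ ReachAvoid g w s x) (hzw : ¬ ReachAvoid g z s w) :
    ¬ ReachAvoid g z s x := by
  intro p
  rcases lemA (x := w) p with h | ⟨q, _⟩
  · exact hzw (Relation.ReflTransGen.mono (fun a b h => h.1) _ _ h)
  · exact hwx (Relation.ReflTransGen.mono (fun a b h => ⟨h.1.1, h.2.1, h.2.2⟩) _ _ q)

lemma reach_of_block {g : V → V → Prop} {s v w : V} (hv : Reach g s v)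
    (hw : ¬ ReachAvoid g w s v) : Reach g s w := by
  rcases lemA (x := w) hv with h | ⟨q, _⟩
  · exact Relation.ReflTransGen.mono (fun a b h => h.1) _ _ h
  · exact absurd q hw

/-- A vertex different from the source blocks itself. -/
lemma block_self {g : V → V → Prop} {s x : V} (hxs : x ≠ s) :
    ¬ ReachAvoid g x s x := by
  intro h
  cases h with
  | refl => exact hxs rfl
  | tail _ he => exact he.2.2 rfl

/-- A blocked-source path starting at the source only reaches the source. -/
lemma ra_from_self {g : V → V → Prop} {s w : V} (h : ReachAvoid g s s w) :
    w = s := by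
  rcases h.cases_head with h | ⟨c, hc, _⟩
  · exact h.symm
  · exact absurd rfl hc.2.1

/-- Antisymmetry-type lemma: if `w` blocks `v` (and `v ≠ w`), then `v` does
not block `w`: there is a path to `w` avoiding `v`. -/
lemma antisym_block {g : V → V → Prop} {s v w : V} (hv : Reach g s v)
    (hwv : ¬ ReachAvoid g w s v) (hne : v ≠ w) : ReachAvoid g v s w := by
  rcases lemA (x := v) hv with P | ⟨_, hq⟩
  · rcases lemA (x := w) P with Q | ⟨R, _⟩
    · exact lemE' (Relation.ReflTransGen.mono (fun a b h => h.1) _ _ Q) hne.symm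
    · exact absurd (Relation.ReflTransGen.mono (fun a b h => ⟨h.1.1, h.2.1, h.2.2⟩) _ _ R) hwv
  · exact absurd rfl hq

/-- Part 1: if `v` is in the dominator subtree of `u` and `u ≠ v` then
blocking `u` disconnects `v`. -/
lemma indom_block {g : V → V → Prop} {s u v : V}
    (h : InDomSubtree g s u v) : u ≠ v → ¬ ReachAvoid g u s v := by
  induction h with
  | refl => intro h; exact absurd rfl h
  | @tail b c hab hbc ih =>
      intro _
      have hbv : ¬ ReachAvoid g b s c := hbc.1.2.resolve_left hbc.2.1
      by_cases hub : u = b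
      · subst hub; exact hbv
      · exact blocks_trans hbv (ih hub)

/-- Incomparable blockers of a common vertex are impossible. -/
lemma blockers_comp {g : V → V → Prop} {s v x y : V} (hxy : x ≠ y)
    (hv : Reach g s v) (hx : ¬ ReachAvoid g x s v) (hy : ¬ ReachAvoid g y s v)
    (p : ReachAvoid g x s y) (q : ReachAvoid g y s x) : False := by
  rcases lemD (x := x) hv with ⟨p', _⟩ | S
  · exact hx p'
  rcases lemD (x := y) S with ⟨T, _⟩ | S'
  · have T' : Relation.ReflTransGen (fun a b => g a b ∧ a ≠ y ∧ b ≠ y) x v :=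
      Relation.ReflTransGen.mono (fun a b h => ⟨h.1.1, h.2.1, h.2.2⟩) _ _ T
    exact hy (Relation.ReflTransGen.trans q T')
  · refine hx (Relation.ReflTransGen.trans p ?_)
    have S'' : Relation.ReflTransGen (fun a b => g a b ∧ b ≠ x) y v :=
      Relation.ReflTransGen.mono (fun a b h => ⟨h.1.1, h.1.2⟩) _ _ S'
    exact lemE S'' hxy.symm

lemma part2aux [Fintype V] (g : V → V → Prop) (s : V) :
    ∀ n : ℕ, ∀ u v : V,
      (Finset.univ.filter (fun x => ¬ ReachAvoid g x s v)).card ≤ n →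
      Reach g s v → u ≠ v → ¬ ReachAvoid g u s v → InDomSubtree g s u v := by
  intro n
  induction n with
  | zero =>
      intro u v hcard hv huv hu
      have : 0 < (Finset.univ.filter (fun x => ¬ ReachAvoid g x s v)).card :=
        Finset.card_pos.mpr ⟨u, Finset.mem_filter.mpr ⟨Finset.mem_univ u, hu⟩⟩
      omega
  | succ n ih =>
      intro u v hcard hv huv hu
      have hvs : v ≠ s := by
        intro h; subst h; exact hu Relation.ReflTransGen.refl
      have hSDne : (Finset.univ.filter (fun x => Dominates g s x v ∧ x ≠ v)).Nonempty :=
        ⟨u, Finset.mem_filter.mpr ⟨Finset.mem_univ _, ⟨hv, Or.inr hu⟩, huv⟩⟩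
      obtain ⟨w, hwmem, hwmax⟩ :=
        Finset.exists_max_image
          (Finset.univ.filter (fun x => Dominates g s x v ∧ x ≠ v))
          (fun x => (Finset.univ.filter (fun z => ¬ ReachAvoid g z s x)).card) hSDne
      obtain ⟨hwdom, hwv⟩ := (Finset.mem_filter.mp hwmem).2
      have hwblock : ¬ ReachAvoid g w s v := hwdom.2.resolve_left hwv
      have hwr : Reach g s w := reach_of_block hv hwblock
      have hidom : IsIdom g s w v := by
        refine ⟨hwdom, hwv, ?_⟩
        intro x hxv hxv'
        by_cases hxw : x = w
        · exact ⟨hwr, Or.inl hxw⟩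
        have hxblock : ¬ ReachAvoid g x s v := hxv.2.resolve_left hxv'
        by_cases hra : ReachAvoid g x s w
        · exfalso
          have hxs : x ≠ s := by
            intro h; subst h; exact hxw (ra_from_self hra).symm
          have hwx : ¬ ReachAvoid g w s x := fun q =>
            blockers_comp hxw hv hxblock hwblock hra q
          have hsub : (Finset.univ.filter fun z => ¬ ReachAvoid g z s w) ⊆
              (Finset.univ.filter fun z => ¬ ReachAvoid g z s x) := by
            intro z hz
            rw [Finset.mem_filter] at *
            exact ⟨Finset.mem_univ _, blocks_trans hwx hz.2⟩
          have hx1 : x ∈ (Finset.univ.filter fun z => ¬ ReachAvoid g z s x) :=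
            Finset.mem_filter.mpr ⟨Finset.mem_univ _, block_self hxs⟩
          have hx2 : x ∉ (Finset.univ.filter fun z => ¬ ReachAvoid g z s w) := by
            intro hmem
            exact (Finset.mem_filter.mp hmem).2 hra
          have hlt := Finset.card_lt_card
            ((Finset.ssubset_iff_of_subset hsub).mpr ⟨x, hx1, hx2⟩)
          have hle := hwmax x (Finset.mem_filter.mpr ⟨Finset.mem_univ _, hxv, hxv'⟩)
          omega
        · exact ⟨hwr, Or.inr hra⟩
      have hudomw : Dominates g s u w := hidom.2.2 u ⟨hv, Or.inr hu⟩ huv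
      by_cases huw : u = w
      · subst huw; exact Relation.ReflTransGen.single hidom
      · have hub : ¬ ReachAvoid g u s w := hudomw.2.resolve_left huw
        have hcard' : (Finset.univ.filter (fun x => ¬ ReachAvoid g x s w)).card ≤ n := by
          have hsub : (Finset.univ.filter fun z => ¬ ReachAvoid g z s w) ⊆
              (Finset.univ.filter fun z => ¬ ReachAvoid g z s v) := by
            intro z hz
            rw [Finset.mem_filter] at *
            exact ⟨Finset.mem_univ _, blocks_trans hwblock hz.2⟩
          have hv1 : v ∈ (Finset.univ.filter fun z => ¬ ReachAvoid g z s v) :=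
            Finset.mem_filter.mpr ⟨Finset.mem_univ _, block_self hvs⟩
          have hv2 : v ∉ (Finset.univ.filter fun z => ¬ ReachAvoid g z s w) := by
            intro hmem
            exact (Finset.mem_filter.mp hmem).2
              (antisym_block hv hwblock (Ne.symm hwv))
          have hlt := Finset.card_lt_card
            ((Finset.ssubset_iff_of_subset hsub).mpr ⟨v, hv1, hv2⟩)
          omega
        exact (ih u w hcard' hudomw.1 huw hub).tail hidom

end Aux

/-- for distinct vertices `u, v`, if `v` lies in the subtree
rooted at `u` of the dominator tree then blocking `u` disconnects `v` from
`s`; conversely, if `v` is reachable from `s` and is not in the subtree rooted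
at `u`, then `v` remains reachable from `s` with `u` removed. -/
theorem domSubtree_blocking [Fintype V] (g : V → V → Prop) (s u v : V)
    (huv : u ≠ v) :
    (InDomSubtree g s u v → ¬ ReachAvoid g u s v) ∧
    (Reach g s v → ¬ InDomSubtree g s u v → ReachAvoid g u s v) := by
  constructor
  · intro h
    exact indom_block h huv
  · intro hv hns
    by_contra hna
    exact hns (part2aux g s _ u v le_rfl hv huv hna)
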